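/- Let V be a finite-dimensional real vector space, r ≥ 1, and J : V →ₗ[ℝ] V a linear endomorphism such that J^{r+1} = 0 and ker(J^k) = range(J^{r+1−k}) for every k with 1 ≤ k ≤ r. Let H₀ be a subspace of V with IsCompl (range J) H₀, and let g be a positive-definite symmetric bilinear form (an inner product) on H₀. Then there exists a positive-definite symmetric bilinear form G on V such that (i) the subspaces H_k := J^k(H₀), 0 ≤ k ≤ r, are pairwise G-orthogonal, and (ii) G(J^k x, J^k y) = g(x, y) for all x, y ∈ H₀ and all 0 ≤ k ≤ r, i.e. each J^k : H₀ → H_k is an isometry onto its image. -/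

import Mathlib

open Module LinearMap

/-- For an `r`-transverse structure `J` on a finite-dimensional real vector
space `V`, a complement `H₀` of `range J`, and an inner product `g` on `H₀`
(a positive-definite symmetric bilinear form), there is a positive-definite
symmetric bilinear form `G` on `V` such that the subspaces
`H_k = J^k(H₀)` (`0 ≤ k ≤ r`) are pairwise `G`-orthogonal and each
`J^k : H₀ → H_k` is an isometry, i.e. `G (J^k x) (J^k y) = g x y`. -/
theorem r_transverse_structure_lifted_metric
    {V : Type*} [AddCommGroup V] [Module ℝ V] [FiniteDimensional ℝ V]
    (r : ℕ) (hr : 1 ≤ r) (J : V →ₗ[ℝ] V)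
    (hnil : J ^ (r + 1) = 0)
    (hker : ∀ k, 1 ≤ k → k ≤ r → LinearMap.ker (J ^ k) = LinearMap.range (J ^ (r + 1 - k)))
    (H₀ : Submodule ℝ V) (hH₀ : IsCompl (LinearMap.range J) H₀)
    (g : H₀ →ₗ[ℝ] H₀ →ₗ[ℝ] ℝ)
    (hgsymm : ∀ x y : H₀, g x y = g y x)
    (hgpos : ∀ x : H₀, x ≠ 0 → 0 < g x x) :
    ∃ G : V →ₗ[ℝ] V →ₗ[ℝ] ℝ,
      (∀ u v : V, G u v = G v u) ∧
      (∀ v : V, v ≠ 0 → 0 < G v v) ∧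
      (∀ k l, k ≤ r → l ≤ r → k ≠ l →
        ∀ x y : H₀, G ((J ^ k) (x : V)) ((J ^ l) (y : V)) = 0) ∧
      (∀ k, k ≤ r → ∀ x y : H₀, G ((J ^ k) (x : V)) ((J ^ k) (y : V)) = g x y) := by
  classical
  have hpow0 : ∀ m, r + 1 ≤ m → (J ^ m : V →ₗ[ℝ] V) = 0 := by
    intro m hm
    obtain ⟨d, rfl⟩ := Nat.exists_eq_add_of_le hm
    rw [pow_add, hnil, zero_mul]
  set Φ : (Fin (r + 1) → H₀) →ₗ[ℝ] V :=
    ∑ k : Fin (r + 1), ((J ^ (k : ℕ)).comp H₀.subtype).comp (LinearMap.proj k) with hΦ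
  have hΦ_apply : ∀ x : Fin (r + 1) → H₀,
      Φ x = ∑ k : Fin (r + 1), (J ^ (k : ℕ)) ((x k : V)) := by
    intro x; simp [hΦ]
  have hsingle : ∀ (k : Fin (r + 1)) (x : H₀),
      Φ (Pi.single k x) = (J ^ (k : ℕ)) ((x : V)) := by
    intro k x
    rw [hΦ_apply, Finset.sum_eq_single k]
    · simp
    · intro j _ hj
      rw [Pi.single_eq_of_ne hj]
      simp
    · simp
  have hker_r : LinearMap.ker (J ^ r) = LinearMap.range J := by
    have h := hker r hr le_rfl
    have h1 : r + 1 - r = 1 := by omega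
    rw [h1, pow_one] at h
    exact h
  -- injectivity
  have hinj : Function.Injective Φ := by
    rw [injective_iff_map_eq_zero]
    intro x hx
    have key : ∀ j : ℕ, ∀ hj : j < r + 1, x ⟨j, hj⟩ = 0 := by
      intro j
      induction j using Nat.strong_induction_on with
      | _ j ih =>
        intro hj
        have hjr : j ≤ r := by omega
        have hx' : ∑ k : Fin (r + 1), (J ^ (k : ℕ)) ((x k : V)) = 0 := by
          rw [← hΦ_apply, hx]
        have happ : ∑ k : Fin (r + 1), (J ^ (r - j + (k : ℕ))) ((x k : V)) = 0 := by
          have := congrArg (fun v => (J ^ (r - j)) v) hx'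
          simp only [map_sum, map_zero] at this
          rw [← this]
          apply Finset.sum_congr rfl
          intro k _
          rw [pow_add]
          rfl
        have hsum : ∑ k : Fin (r + 1), (J ^ (r - j + (k : ℕ))) ((x k : V))
            = (J ^ (r - j + (((⟨j, hj⟩ : Fin (r + 1)) : Fin (r + 1)) : ℕ)))
              ((x ⟨j, hj⟩ : V)) := by
          apply Finset.sum_eq_single_of_mem (⟨j, hj⟩ : Fin (r + 1)) (Finset.mem_univ _)
          intro k _ hk
          have hkj : (k : ℕ) ≠ j := by
            intro h; exact hk (Fin.ext h)
          rcases lt_or_gt_of_ne hkj with hlt | hgt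
          · have : x k = 0 := by
              have := ih (k : ℕ) hlt k.2
              simpa [Fin.eta] using this
            rw [this]
            simp
          · have : (J ^ (r - j + (k : ℕ)) : V →ₗ[ℝ] V) = 0 :=
              hpow0 _ (by omega)
            rw [this]
            rfl
        simp only [Fin.val_mk] at hsum
        have hrj : r - j + j = r := by omega
        rw [hsum, hrj] at happ
        have hmem : (x ⟨j, hj⟩ : V) ∈ LinearMap.range J := by
          rw [← hker_r]
          exact happ
        have hzero : (x ⟨j, hj⟩ : V) = 0 :=
          Submodule.disjoint_def.mp hH₀.disjoint _ hmem (x ⟨j, hj⟩).2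
        exact Subtype.ext hzero
    funext k
    have := key (k : ℕ) k.2
    simpa [Fin.eta] using this
  -- surjectivity
  have hsurj : Function.Surjective Φ := by
    have hstep : ∀ m : ℕ, m ≤ r + 1 →
        LinearMap.range (J ^ (r + 1 - m)) ≤ LinearMap.range Φ := by
      intro m
      induction m with
      | zero =>
        intro _
        simp [hnil]
      | succ m ih =>
        intro hm
        rintro v ⟨w, rfl⟩
        have hw : w ∈ LinearMap.range J ⊔ H₀ := by
          rw [hH₀.sup_eq_top]; trivial
        obtain ⟨a, ha, h, hh, rfl⟩ := Submodule.mem_sup.mp hw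
        obtain ⟨b, rfl⟩ := ha
        have he : r + 1 - (m + 1) = r - m := by omega
        rw [map_add]
        apply Submodule.add_mem
        · have h1 : (J ^ (r + 1 - (m + 1))) (J b) = (J ^ (r + 1 - m)) b := by
            rw [he]
            have : r + 1 - m = (r - m) + 1 := by omega
            rw [this, pow_succ]
            rfl
          rw [h1]
          exact ih (by omega) ⟨b, rfl⟩
        · have hrm : r - m < r + 1 := by omega
          refine ⟨Pi.single ⟨r - m, hrm⟩ ⟨h, hh⟩, ?_⟩
          rw [hsingle]
          simp [he]
    intro v
    have hv : v ∈ LinearMap.range (J ^ (r + 1 - (r + 1))) := by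
      have h0 : r + 1 - (r + 1) = 0 := by omega
      rw [h0, pow_zero]
      exact ⟨v, rfl⟩
    obtain ⟨x, hx⟩ := hstep (r + 1) le_rfl hv
    exact ⟨x, hx⟩
  set e : (Fin (r + 1) → H₀) ≃ₗ[ℝ] V := LinearEquiv.ofBijective Φ ⟨hinj, hsurj⟩ with he
  set G : V →ₗ[ℝ] V →ₗ[ℝ] ℝ :=
    ∑ k : Fin (r + 1), g.compl₁₂ ((LinearMap.proj k).comp e.symm.toLinearMap)
      ((LinearMap.proj k).comp e.symm.toLinearMap) with hG
  have hG_apply : ∀ u v : V, G u v = ∑ k : Fin (r + 1), g (e.symm u k) (e.symm v k) := by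
    intro u v; simp [hG]
  have hsymm_e : ∀ (k : Fin (r + 1)) (x : H₀),
      e.symm ((J ^ (k : ℕ)) ((x : V))) = Pi.single k x := by
    intro k x
    apply e.injective
    rw [LinearEquiv.apply_symm_apply]
    rw [he]
    exact (hsingle k x).symm
  have hgnn : ∀ x : H₀, 0 ≤ g x x := by
    intro x
    by_cases hx : x = 0
    · simp [hx]
    · exact le_of_lt (hgpos x hx)
  refine ⟨G, ?_, ?_, ?_, ?_⟩
  · intro u v
    rw [hG_apply, hG_apply]
    exact Finset.sum_congr rfl fun k _ => hgsymm _ _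
  · intro v hv
    rw [hG_apply]
    have hne : e.symm v ≠ 0 := by
      intro h
      apply hv
      have := congrArg e h
      rw [LinearEquiv.apply_symm_apply, map_zero] at this
      exact this
    obtain ⟨k, hk⟩ : ∃ k, e.symm v k ≠ 0 := by
      by_contra h
      push_neg at h
      exact hne (funext h)
    exact Finset.sum_pos' (fun j _ => hgnn _) ⟨k, Finset.mem_univ k, hgpos _ hk⟩
  · intro k l hk hl hkl x y
    have hk' : (⟨k, by omega⟩ : Fin (r + 1)) = ⟨k, by omega⟩ := rfl
    rw [hG_apply]
    have h1 : e.symm ((J ^ k) ((x : V))) = Pi.single (⟨k, by omega⟩ : Fin (r + 1)) x :=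
      hsymm_e ⟨k, by omega⟩ x
    have h2 : e.symm ((J ^ l) ((y : V))) = Pi.single (⟨l, by omega⟩ : Fin (r + 1)) y :=
      hsymm_e ⟨l, by omega⟩ y
    rw [h1, h2]
    apply Finset.sum_eq_zero
    intro j _
    by_cases hjk : j = (⟨k, by omega⟩ : Fin (r + 1))
    · have hjl : j ≠ (⟨l, by omega⟩ : Fin (r + 1)) := by
        rw [hjk]
        intro h
        exact hkl (by simpa using congrArg Fin.val h)
      rw [Pi.single_eq_of_ne hjl]
      simp
    · rw [Pi.single_eq_of_ne hjk]
      simp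
  · intro k hk x y
    rw [hG_apply]
    have h1 : e.symm ((J ^ k) ((x : V))) = Pi.single (⟨k, by omega⟩ : Fin (r + 1)) x :=
      hsymm_e ⟨k, by omega⟩ x
    have h2 : e.symm ((J ^ k) ((y : V))) = Pi.single (⟨k, by omega⟩ : Fin (r + 1)) y :=
      hsymm_e ⟨k, by omega⟩ y
    rw [h1, h2, Finset.sum_eq_single (⟨k, by omega⟩ : Fin (r + 1))]
    · simp
    · intro j _ hj
      rw [Pi.single_eq_of_ne hj, Pi.single_eq_of_ne hj]
      simp
    · intro h
      exact absurd (Finset.mem_univ _) h
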